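/- Let f : ℝ² → ℝ be nonnegative and integrable. Define k = ∫ f(v) sqrt(1+|v|²) dv and σ = ∫ f(v) (sqrt(1+|v|²) - v1) dv. Then there is an absolute constant C (independent of f) such that ∫ f(v) dv ≤ C * sqrt(k * σ). -/

import Mathlib

open MeasureTheory

theorem stmt2 :
    ∃ C > 0, ∀ f : ℝ × ℝ → ℝ,
      (∀ v, 0 ≤ f v) →
      Integrable f →
      Integrable (fun v : ℝ × ℝ => f v * Real.sqrt (1 + v.1^2 + v.2^2)) →
      (∫ v : ℝ × ℝ, f v) ≤
        C * Real.sqrt ((∫ v : ℝ × ℝ, f v * Real.sqrt (1 + v.1^2 + v.2^2)) *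
          (∫ v : ℝ × ℝ, f v * (Real.sqrt (1 + v.1^2 + v.2^2) - v.1))) := by
  refine ⟨Real.sqrt 2, Real.sqrt_pos.mpr (by norm_num), ?_⟩
  intro f hf hfint hfg
  set g : ℝ × ℝ → ℝ := fun v => Real.sqrt (1 + v.1^2 + v.2^2) with hgdef
  have hsq : ∀ v : ℝ × ℝ, g v ^ 2 = 1 + v.1^2 + v.2^2 := fun v =>
    Real.sq_sqrt (by nlinarith [sq_nonneg v.1, sq_nonneg v.2])
  have hgpos : ∀ v : ℝ × ℝ, 0 < g v := fun v =>
    Real.sqrt_pos.mpr (by nlinarith [sq_nonneg v.1, sq_nonneg v.2])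
  have habs : ∀ v : ℝ × ℝ, |v.1| ≤ g v := by
    intro v
    rw [← Real.sqrt_sq_eq_abs]
    exact Real.sqrt_le_sqrt (by nlinarith [sq_nonneg v.2])
  have hhnn : ∀ v : ℝ × ℝ, 0 ≤ g v - v.1 := fun v => by
    have := habs v; have := abs_le.mp this; linarith [this.2]
  have hgh : ∀ v : ℝ × ℝ, (1:ℝ)/2 ≤ g v * (g v - v.1) := by
    intro v
    nlinarith [sq_nonneg (g v - v.1), hsq v, sq_nonneg v.2]
  have hgh2 : ∀ v : ℝ × ℝ, g v * (g v - v.1) ≤ 2 * g v ^ 2 := by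
    intro v
    have h1 := habs v
    have h2 := (abs_le.mp h1).1
    nlinarith [hgpos v]
  -- the two square-root functions
  set a : ℝ × ℝ → ℝ := fun v => Real.sqrt (f v * g v) with hadef
  set b : ℝ × ℝ → ℝ := fun v => Real.sqrt (f v * (g v - v.1)) with hbdef
  have hfgnn : ∀ v, 0 ≤ f v * g v := fun v => mul_nonneg (hf v) (hgpos v).le
  have hfhnn : ∀ v, 0 ≤ f v * (g v - v.1) := fun v => mul_nonneg (hf v) (hhnn v)
  have hab : ∀ v, a v * b v = Real.sqrt (f v * g v * (f v * (g v - v.1))) := by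
    intro v; rw [Real.sqrt_mul (hfgnn v)]
  -- pointwise lower bound : f v ≤ √2 * (a v * b v)
  have key : ∀ v, f v ≤ Real.sqrt 2 * (a v * b v) := by
    intro v
    have h1 : f v * g v * (f v * (g v - v.1)) = f v ^ 2 * (g v * (g v - v.1)) := by ring
    have h2 : f v ^ 2 * (1/2 : ℝ) ≤ f v * g v * (f v * (g v - v.1)) := by
      rw [h1]; exact mul_le_mul_of_nonneg_left (hgh v) (sq_nonneg _)
    have h3 : Real.sqrt (f v ^ 2 * (1/2)) ≤ a v * b v := by
      rw [hab v]; exact Real.sqrt_le_sqrt h2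
    have h4 : Real.sqrt (f v ^ 2 * (1/2)) = f v * Real.sqrt (1/2) := by
      rw [Real.sqrt_mul (sq_nonneg _), Real.sqrt_sq (hf v)]
    have h5 : Real.sqrt 2 * Real.sqrt (1/2 : ℝ) = 1 := by
      rw [← Real.sqrt_mul (by norm_num : (0:ℝ) ≤ 2)]; norm_num
    calc f v = Real.sqrt 2 * (f v * Real.sqrt (1/2)) := by
          rw [mul_comm (f v) _, ← mul_assoc, h5, one_mul]
      _ ≤ Real.sqrt 2 * (a v * b v) := by
          apply mul_le_mul_of_nonneg_left _ (Real.sqrt_nonneg 2)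
          rw [← h4]; exact h3
  -- pointwise upper bound for integrability of a*b
  have hub : ∀ v, a v * b v ≤ Real.sqrt 2 * (f v * g v) := by
    intro v
    rw [hab v]
    have h1 : f v * g v * (f v * (g v - v.1)) ≤ 2 * (f v * g v)^2 := by
      have := hgh2 v
      nlinarith [sq_nonneg (f v), hf v]
    calc Real.sqrt (f v * g v * (f v * (g v - v.1))) ≤ Real.sqrt (2 * (f v * g v)^2) :=
          Real.sqrt_le_sqrt h1
      _ = Real.sqrt 2 * (f v * g v) := by
          rw [Real.sqrt_mul (by norm_num : (0:ℝ) ≤ 2), Real.sqrt_sq (hfgnn v)]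
  -- measurability
  have hgcont : Continuous g := by
    apply Real.continuous_sqrt.comp
    continuity
  have hfm : AEStronglyMeasurable f volume := hfint.aestronglyMeasurable
  have hfgm : AEStronglyMeasurable (fun v => f v * g v) volume := hfg.aestronglyMeasurable
  -- integrability of f v * v.1
  have hfv1 : Integrable (fun v : ℝ × ℝ => f v * v.1) := by
    refine hfg.mono (hfm.mul (measurable_fst.aestronglyMeasurable)) ?_
    filter_upwards with v
    rw [norm_mul, norm_mul, Real.norm_of_nonneg (hf v), Real.norm_of_nonneg (hgpos v).le]
    exact mul_le_mul_of_nonneg_left ((Real.norm_eq_abs _).le.trans (habs v)) (hf v)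
  have hfh : Integrable (fun v : ℝ × ℝ => f v * (g v - v.1)) := by
    have := hfg.sub hfv1
    refine this.congr ?_
    filter_upwards with v
    simp only [Pi.sub_apply]
    show f v * g v - f v * v.1 = f v * (g v - v.1)
    ring
  -- Memℒp 2 for a and b
  have ham : AEStronglyMeasurable a volume :=
    Real.continuous_sqrt.comp_aestronglyMeasurable hfgm
  have hbm : AEStronglyMeasurable b volume :=
    Real.continuous_sqrt.comp_aestronglyMeasurable hfh.aestronglyMeasurable
  have hasq : (fun v => a v ^ 2) = fun v => f v * g v := by
    funext v; show a v ^ 2 = f v * g v; exact Real.sq_sqrt (hfgnn v)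
  have hbsq : (fun v => b v ^ 2) = fun v => f v * (g v - v.1) := by
    funext v; show b v ^ 2 = f v * (g v - v.1); exact Real.sq_sqrt (hfhnn v)
  have haL2 : MemLp a (ENNReal.ofReal 2) volume := by
    rw [show ENNReal.ofReal 2 = 2 by norm_num]
    exact (memLp_two_iff_integrable_sq ham).2 (by rw [hasq]; exact hfg)
  have hbL2 : MemLp b (ENNReal.ofReal 2) volume := by
    rw [show ENNReal.ofReal 2 = 2 by norm_num]
    exact (memLp_two_iff_integrable_sq hbm).2 (by rw [hbsq]; exact hfh)
  -- integrability of a * b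
  have habint : Integrable (fun v => a v * b v) := by
    refine ((hfg.const_mul (Real.sqrt 2)).mono' (ham.mul hbm) ?_)
    filter_upwards with v
    rw [Real.norm_of_nonneg (mul_nonneg (Real.sqrt_nonneg _) (Real.sqrt_nonneg _))]
    exact hub v
  -- Cauchy-Schwarz
  have hconj : Real.HolderConjugate 2 2 := Real.HolderConjugate.two_two
  have hCS := integral_mul_le_Lp_mul_Lq_of_nonneg hconj
    (Filter.Eventually.of_forall fun v => Real.sqrt_nonneg _)
    (Filter.Eventually.of_forall fun v => Real.sqrt_nonneg _) haL2 hbL2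
  have hrpow : ∀ x : ℝ, 0 ≤ x → ∀ c : ℝ → ℝ, True := fun _ _ _ => trivial
  have ha2 : (∫ v : ℝ × ℝ, a v ^ (2:ℝ)) = ∫ v : ℝ × ℝ, f v * g v := by
    refine integral_congr_ae (Filter.Eventually.of_forall fun v => ?_)
    show a v ^ (2:ℝ) = f v * g v
    rw [show a v ^ (2:ℝ) = a v ^ (2:ℕ) by
      rw [← Real.rpow_natCast (a v) 2]; norm_num]
    exact Real.sq_sqrt (hfgnn v)
  have hb2 : (∫ v : ℝ × ℝ, b v ^ (2:ℝ)) = ∫ v : ℝ × ℝ, f v * (g v - v.1) := by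
    refine integral_congr_ae (Filter.Eventually.of_forall fun v => ?_)
    show b v ^ (2:ℝ) = f v * (g v - v.1)
    rw [show b v ^ (2:ℝ) = b v ^ (2:ℕ) by
      rw [← Real.rpow_natCast (b v) 2]; norm_num]
    exact Real.sq_sqrt (hfhnn v)
  have hknn : 0 ≤ ∫ v : ℝ × ℝ, f v * g v :=
    integral_nonneg fun v => hfgnn v
  have hsnn : 0 ≤ ∫ v : ℝ × ℝ, f v * (g v - v.1) :=
    integral_nonneg fun v => hfhnn v
  have hCS' : (∫ v : ℝ × ℝ, a v * b v) ≤
      Real.sqrt ((∫ v : ℝ × ℝ, f v * g v) * ∫ v : ℝ × ℝ, f v * (g v - v.1)) := by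
    have := hCS
    rw [ha2, hb2] at this
    calc (∫ v : ℝ × ℝ, a v * b v)
        ≤ (∫ v : ℝ × ℝ, f v * g v) ^ (1/(2:ℝ)) *
          (∫ v : ℝ × ℝ, f v * (g v - v.1)) ^ (1/(2:ℝ)) := this
      _ = Real.sqrt ((∫ v : ℝ × ℝ, f v * g v) * ∫ v : ℝ × ℝ, f v * (g v - v.1)) := by
          rw [← Real.sqrt_eq_rpow, ← Real.sqrt_eq_rpow, ← Real.sqrt_mul hknn]
  calc (∫ v : ℝ × ℝ, f v)
      ≤ ∫ v : ℝ × ℝ, Real.sqrt 2 * (a v * b v) :=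
        integral_mono hfint (habint.const_mul _) key
    _ = Real.sqrt 2 * ∫ v : ℝ × ℝ, a v * b v := integral_const_mul _ _
    _ ≤ Real.sqrt 2 *
        Real.sqrt ((∫ v : ℝ × ℝ, f v * g v) * ∫ v : ℝ × ℝ, f v * (g v - v.1)) :=
        mul_le_mul_of_nonneg_left hCS' (Real.sqrt_nonneg 2)
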